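/- Let (Ω, B_max, P) be a probability space and B_reg ⊆ B_max a Boolean algebra. Let l ≥ 1, let B_0 be a sub-σ-algebra, let B_1, …, B_l be sub-σ-algebras of B_0, and let B'_1, …, B'_l be finite sub-σ-algebras of B_max. Let (B̃_i)_{i ∈ I} be an additional finite tuple of sub-σ-algebras. If the tuple (B̃_i)_{i ∈ I} together with (B_1 ∨ B'_1, …, B_l ∨ B'_l, B_0) obeys the uniform intersection property, then the tuple (B̃_i)_{i ∈ I} together with the single σ-algebra B_0 ∨ B'_1 ∨ … ∨ B'_l also obeys the uniform intersection property. -/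
import Mathlib


open MeasureTheory MeasurableSpace
open scoped ENNReal

variable {Ω : Type*}

/-- A tuple `(B_i)_{i ∈ ι}` of sub-σ-algebras has the **uniform intersection property** (UIP)
w.r.t. `P` and the regular algebra `Breg` if: for every tuple of events `E_i ∈ B_i` with
`P(⋀_i E_i) = 0` and every `ε > 0`, there are events `F_i ∈ B_i ∩ Breg` with
`P(E_i \ F_i) ≤ ε` for each `i` and `⋀_i F_i = ∅`. -/
def UIP (m0 : MeasurableSpace Ω) (P : @Measure Ω m0) (Breg : Set (Set Ω))
    {ι : Type*} (B : ι → MeasurableSpace Ω) : Prop :=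
  ∀ E : ι → Set Ω, (∀ i, MeasurableSet[B i] (E i)) → P (⋂ i, E i) = 0 →
    ∀ ε : ℝ, 0 < ε → ∃ F : ι → Set Ω,
      (∀ i, MeasurableSet[B i] (F i) ∧ F i ∈ Breg) ∧
      (∀ i, P (E i \ F i) ≤ ENNReal.ofReal ε) ∧
      (⋂ i, F i) = ∅

/-- **Finite rank extensions preserve the UIP.**  Let `B₀` be a sub-σ-algebra, `B₁, …, B_l`
factors of `B₀`, and `B'₁, …, B'_l` finite σ-algebras.  If the tuple `(B̃_i)_{i ∈ I}`
together with `(B₁ ∨ B'₁, …, B_l ∨ B'_l, B₀)` obeys the UIP, then `(B̃_i)_{i ∈ I}` together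
with `B₀ ∨ B'₁ ∨ … ∨ B'_l` also obeys the UIP. -/
theorem uip_finite_rank [m0 : MeasurableSpace Ω] (P : Measure Ω) [IsProbabilityMeasure P]
    (Breg : Set (Set Ω)) (hBalg : IsSetAlgebra Breg) (hBsub : ∀ s ∈ Breg, MeasurableSet s)
    (l : ℕ) (hl : 1 ≤ l)
    (B0 : MeasurableSpace Ω) (hB0 : B0 ≤ m0)
    (B : Fin l → MeasurableSpace Ω) (hB : ∀ j, B j ≤ B0)
    (B' : Fin l → MeasurableSpace Ω) (hB' : ∀ j, B' j ≤ m0)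
    (hfin : ∀ j, {s : Set Ω | MeasurableSet[B' j] s}.Finite)
    {I : Type*} [Finite I] (Bt : I → MeasurableSpace Ω) (hBt : ∀ i, Bt i ≤ m0)
    (hUIP : UIP m0 P Breg
      (Sum.elim Bt (fun j : Option (Fin l) => j.elim B0 (fun j => B j ⊔ B' j)))) :
    UIP m0 P Breg (fun i : Option I => i.elim (B0 ⊔ ⨆ j, B' j) Bt) := by
  classical
  intro E hE hE0 ε hε
  -- the atom map: `τ x j` is the atom of `B' j` containing `x`
  set τ : Ω → Fin l → Set Ω := fun x j => ⋂₀ {s | MeasurableSet[B' j] s ∧ x ∈ s} with hτdef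
  have hxτ : ∀ x j, x ∈ τ x j := fun x j => Set.mem_sInter.2 fun s hs => hs.2
  have hτsub : ∀ x j s, MeasurableSet[B' j] s → x ∈ s → τ x j ⊆ s :=
    fun x j s hs hx => Set.sInter_subset_of_mem ⟨hs, hx⟩
  have hτmeas : ∀ x j, MeasurableSet[B' j] (τ x j) := fun x j =>
    MeasurableSet.sInter (((hfin j).subset fun s hs => hs.1).countable) fun s hs => hs.1
  have hKfin : (Set.range τ).Finite := by
    refine Set.Finite.subset (Set.Finite.pi fun j => hfin j) ?_
    rintro f ⟨x, rfl⟩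
    exact fun j _ => hτmeas x j
  set K : Finset (Fin l → Set Ω) := hKfin.toFinset with hKdef
  set A : (Fin l → Set Ω) → Set Ω := fun f => {x | τ x = f} with hAdef
  set Aat : (Fin l → Set Ω) → Fin l → Set Ω := fun f j => {x | τ x j = f j} with hAatdef
  -- atom membership determines membership in measurable sets
  have hdet : ∀ x j s, MeasurableSet[B' j] s → (x ∈ s ↔ τ x j ⊆ s) :=
    fun x j s hs => ⟨fun hx => hτsub x j s hs hx, fun h => h (hxτ x j)⟩
  -- atoms (of elements of the range) are measurable
  have hAatmeas : ∀ f ∈ Set.range τ, ∀ j, MeasurableSet[B' j] (Aat f j) := by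
    rintro f ⟨x₀, rfl⟩ j
    have hfj : MeasurableSet[B' j] (τ x₀ j) := hτmeas x₀ j
    have hrw : Aat (τ x₀) j
        = ⋂ s ∈ {s | MeasurableSet[B' j] s}, (if τ x₀ j ⊆ s then s else sᶜ) := by
      ext x
      simp only [hAatdef, Set.mem_setOf_eq, Set.mem_iInter]
      constructor
      · intro h s hs
        split_ifs with hsub
        · exact (hdet x j s hs).2 (h ▸ hsub)
        · exact fun hx => hsub (h ▸ (hdet x j s hs).1 hx)
      · intro h
        refine subset_antisymm ?_ ?_
        · refine hτsub x j _ hfj ?_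
          have := h (τ x₀ j) hfj
          rwa [if_pos subset_rfl] at this
        · intro y hy
          refine Set.mem_sInter.2 fun s hs => ?_
          have hxs := h s hs.1
          by_cases hsub : τ x₀ j ⊆ s
          · exact hsub hy
          · rw [if_neg hsub] at hxs; exact absurd hs.2 hxs
    rw [hrw]
    refine MeasurableSet.biInter (hfin j).countable fun s hs => ?_
    split_ifs
    · exact hs
    · exact hs.compl
  -- decomposition of `E none` over the atoms
  have hdecomp : ∀ f, ∃ Sf, MeasurableSet[B0] Sf ∧ E none ∩ A f = Sf ∩ A f := by
    have hle : (B0 ⊔ ⨆ j, B' j) ≤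
        ({ MeasurableSet' := fun T => ∀ f, ∃ Sf, MeasurableSet[B0] Sf ∧ T ∩ A f = Sf ∩ A f
           measurableSet_empty := fun f => ⟨∅, @MeasurableSet.empty Ω B0, by simp⟩
           measurableSet_compl := by
             intro T hT f
             obtain ⟨Sf, hSf, hTSf⟩ := hT f
             refine ⟨Sfᶜ, hSf.compl, ?_⟩
             have hpt : ∀ x, x ∈ A f → (x ∈ T ↔ x ∈ Sf) := by
               intro x hx
               have h := Set.ext_iff.1 hTSf x
               simp only [Set.mem_inter_iff] at h
               exact ⟨fun hxt => (h.1 ⟨hxt, hx⟩).1, fun hxs => (h.2 ⟨hxs, hx⟩).1⟩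
             ext x
             simp only [Set.mem_inter_iff, Set.mem_compl_iff]
             exact ⟨fun ⟨h1, h2⟩ => ⟨fun hs => h1 ((hpt x h2).2 hs), h2⟩,
               fun ⟨h1, h2⟩ => ⟨fun ht => h1 ((hpt x h2).1 ht), h2⟩⟩
           measurableSet_iUnion := by
             intro T hT f
             choose Sf hSf hTSf using fun n => hT n f
             refine ⟨⋃ n, Sf n, (MeasurableSet.iUnion hSf : MeasurableSet[B0] _), ?_⟩
             rw [Set.iUnion_inter, Set.iUnion_inter]
             exact Set.iUnion_congr hTSf } : MeasurableSpace Ω) := by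
      refine sup_le ?_ (iSup_le fun j => ?_)
      · exact fun T hT f => ⟨T, hT, rfl⟩
      · intro s hs f
        by_cases hsub : f j ⊆ s
        · refine ⟨Set.univ, @MeasurableSet.univ Ω B0, ?_⟩
          ext x
          simp only [Set.mem_inter_iff, Set.univ_inter, Set.mem_univ, true_and]
          constructor
          · exact fun h => h.2
          · intro hx
            refine ⟨?_, hx⟩
            have hxA : τ x = f := hx
            exact hsub (hxA ▸ hxτ x j)
        · refine ⟨∅, @MeasurableSet.empty Ω B0, ?_⟩
          ext x
          simp only [Set.mem_inter_iff, Set.empty_inter, Set.mem_empty_iff_false,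
            iff_false, not_and]
          intro hxs hx
          have hxA : τ x = f := hx
          exact hsub (hxA ▸ hτsub x j s hs hxs)
    exact hle _ (hE none)
  choose S hSmeas hSeq using hdecomp
  set δ : ℝ := ε / (K.card * (l + 1) + 1) with hδdef
  have hδpos : 0 < δ := by
    apply div_pos hε
    positivity
  have hεeq : ((K.card : ℝ) * ((l:ℝ) + 1) + 1) * δ = ε := by
    rw [hδdef]
    field_simp
  -- apply the UIP hypothesis on each atom
  have hmain : ∀ f, f ∈ Set.range τ →
      ∃ F : I ⊕ Option (Fin l) → Set Ω,
        (∀ k, MeasurableSet[Sum.elim Bt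
            (fun j : Option (Fin l) => j.elim B0 (fun j => B j ⊔ B' j)) k] (F k)
          ∧ F k ∈ Breg) ∧
        (∀ k, P (Sum.elim (fun i => E (some i))
            (fun j : Option (Fin l) => j.elim (S f) (Aat f)) k \ F k) ≤ ENNReal.ofReal δ) ∧
        (⋂ k, F k) = ∅ := by
    intro f hf
    refine hUIP _ ?_ ?_ δ hδpos
    · rintro (i | _ | j)
      · exact hE (some i)
      · exact hSmeas f
      · exact le_sup_right (α := MeasurableSpace Ω) _ (hAatmeas f hf j)
    · refine measure_mono_null ?_ hE0
      intro x hx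
      simp only [Set.mem_iInter] at hx ⊢
      have hxS : x ∈ S f := hx (Sum.inr none)
      have hxA : x ∈ A f := funext fun j => hx (Sum.inr (some j))
      intro o
      cases o with
      | some i => exact hx (Sum.inl i)
      | none =>
        have hmem : x ∈ S f ∩ A f := ⟨hxS, hxA⟩
        rw [← hSeq f] at hmem
        exact hmem.1
  choose! F₀ hF₀m hF₀d hF₀e using hmain
  have hmemK : ∀ f, f ∈ K ↔ f ∈ Set.range τ := fun f => hKfin.mem_toFinset
  -- construct the new events
  set Fnone : Set Ω :=
    ⋃ f ∈ K, (F₀ f (Sum.inr none) ∩ ⋂ j ∈ (Finset.univ : Finset (Fin l)),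
      F₀ f (Sum.inr (some j))) with hFnonedef
  set Fsome : I → Set Ω := fun i => ⋂ f ∈ K, F₀ f (Sum.inl i) with hFsomedef
  refine ⟨fun o => o.elim Fnone Fsome, ?_, ?_, ?_⟩
  · -- measurability and regularity
    rintro (_ | i)
    · constructor
      · -- measurable in B0 ⊔ ⨆ j, B' j
        refine MeasurableSet.biUnion K.countable_toSet fun f hf => ?_
        refine MeasurableSet.inter ?_ ?_
        · exact (le_sup_left (α := MeasurableSpace Ω) :
            B0 ≤ B0 ⊔ ⨆ j, B' j) _ ((hF₀m f ((hmemK f).1 hf) (Sum.inr none)).1)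
        · refine MeasurableSet.biInter (Finset.univ : Finset (Fin l)).countable_toSet
            fun j _ => ?_
          have h1 : MeasurableSet[B j ⊔ B' j] (F₀ f (Sum.inr (some j))) :=
            (hF₀m f ((hmemK f).1 hf) (Sum.inr (some j))).1
          have h2 : (B j ⊔ B' j) ≤ B0 ⊔ ⨆ j, B' j :=
            sup_le ((hB j).trans le_sup_left)
              ((le_iSup B' j).trans le_sup_right)
          exact h2 _ h1
      · refine hBalg.biUnion_mem K fun f hf => ?_
        refine hBalg.inter_mem ((hF₀m f ((hmemK f).1 hf) (Sum.inr none)).2) ?_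
        exact hBalg.biInter_mem Finset.univ fun j _ =>
          (hF₀m f ((hmemK f).1 hf) (Sum.inr (some j))).2
    · constructor
      · exact MeasurableSet.biInter K.countable_toSet fun f hf =>
          (hF₀m f ((hmemK f).1 hf) (Sum.inl i)).1
      · exact hBalg.biInter_mem K fun f hf => (hF₀m f ((hmemK f).1 hf) (Sum.inl i)).2
  · -- measure bounds
    rintro (_ | i)
    · -- the `none` case
      have hsub : E none \ Fnone ⊆
          ⋃ f ∈ K, ((S f \ F₀ f (Sum.inr none)) ∪
            ⋃ j, (Aat f j \ F₀ f (Sum.inr (some j)))) := by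
        intro x ⟨hxE, hxF⟩
        have hfK : τ x ∈ K := (hmemK (τ x)).2 ⟨x, rfl⟩
        have hxA : x ∈ A (τ x) := rfl
        have hxS : x ∈ S (τ x) := by
          have hmem : x ∈ E none ∩ A (τ x) := ⟨hxE, hxA⟩
          rw [hSeq (τ x)] at hmem
          exact hmem.1
        refine Set.mem_biUnion hfK ?_
        by_cases hH : x ∈ F₀ (τ x) (Sum.inr none)
        · have hnot : ¬ ∀ j, x ∈ F₀ (τ x) (Sum.inr (some j)) := by
            intro hall
            exact hxF (Set.mem_biUnion hfK ⟨hH, by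
              simp only [Set.mem_iInter]
              exact fun j _ => hall j⟩)
          push_neg at hnot
          obtain ⟨j, hj⟩ := hnot
          exact Or.inr (Set.mem_iUnion.2 ⟨j, ⟨rfl, hj⟩⟩)
        · exact Or.inl ⟨hxS, hH⟩
      refine le_trans (measure_mono hsub) ?_
      refine le_trans (measure_biUnion_finset_le K _) ?_
      have hbound : ∀ f ∈ K, P ((S f \ F₀ f (Sum.inr none)) ∪
          ⋃ j, (Aat f j \ F₀ f (Sum.inr (some j))))
            ≤ ENNReal.ofReal (((l:ℝ) + 1) * δ) := by
        intro f hf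
        refine le_trans (measure_union_le _ _) ?_
        have h1 : P (S f \ F₀ f (Sum.inr none)) ≤ ENNReal.ofReal δ :=
          hF₀d f ((hmemK f).1 hf) (Sum.inr none)
        have h2 : P (⋃ j, (Aat f j \ F₀ f (Sum.inr (some j))))
            ≤ ENNReal.ofReal ((l:ℝ) * δ) := by
          refine le_trans (measure_iUnion_le _) ?_
          calc ∑' j : Fin l, P (Aat f j \ F₀ f (Sum.inr (some j)))
              ≤ ∑' _j : Fin l, ENNReal.ofReal δ :=
                ENNReal.tsum_le_tsum fun j => hF₀d f ((hmemK f).1 hf) (Sum.inr (some j))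
            _ = ENNReal.ofReal ((l:ℝ) * δ) := by
                rw [tsum_fintype, Finset.sum_const, Finset.card_univ, Fintype.card_fin,
                  nsmul_eq_mul, ← ENNReal.ofReal_natCast l,
                  ← ENNReal.ofReal_mul (Nat.cast_nonneg l)]
        calc P (S f \ F₀ f (Sum.inr none)) + P (⋃ j, (Aat f j \ F₀ f (Sum.inr (some j))))
            ≤ ENNReal.ofReal δ + ENNReal.ofReal ((l:ℝ) * δ) := add_le_add h1 h2
          _ = ENNReal.ofReal (((l:ℝ) + 1) * δ) := by
              rw [← ENNReal.ofReal_add hδpos.le (mul_nonneg (Nat.cast_nonneg l) hδpos.le)]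
              congr 1
              ring
      refine le_trans (Finset.sum_le_sum hbound) ?_
      rw [Finset.sum_const, nsmul_eq_mul, ← ENNReal.ofReal_natCast K.card,
        ← ENNReal.ofReal_mul (Nat.cast_nonneg K.card)]
      refine ENNReal.ofReal_le_ofReal ?_
      nlinarith [hεeq, hδpos.le]
    · -- the `some i` case
      have hsub : E (some i) \ Fsome i ⊆ ⋃ f ∈ K, (E (some i) \ F₀ f (Sum.inl i)) := by
        intro x ⟨hxE, hxF⟩
        have hnot : ¬ ∀ f ∈ K, x ∈ F₀ f (Sum.inl i) := by
          intro hall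
          exact hxF (Set.mem_iInter₂.2 hall)
        push_neg at hnot
        obtain ⟨f, hf, hxf⟩ := hnot
        exact Set.mem_biUnion hf ⟨hxE, hxf⟩
      refine le_trans (measure_mono hsub) ?_
      refine le_trans (measure_biUnion_finset_le K _) ?_
      have hbound : ∀ f ∈ K, P (E (some i) \ F₀ f (Sum.inl i)) ≤ ENNReal.ofReal δ :=
        fun f hf => hF₀d f ((hmemK f).1 hf) (Sum.inl i)
      refine le_trans (Finset.sum_le_sum hbound) ?_
      rw [Finset.sum_const, nsmul_eq_mul, ← ENNReal.ofReal_natCast K.card,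
        ← ENNReal.ofReal_mul (Nat.cast_nonneg K.card)]
      refine ENNReal.ofReal_le_ofReal ?_
      have hl1 : (1:ℝ) ≤ (l:ℝ) := by exact_mod_cast hl
      have hKc : (0:ℝ) ≤ (K.card : ℝ) := Nat.cast_nonneg _
      nlinarith [hεeq, hδpos.le]
    -- empty intersection
  · ext x
    simp only [Set.mem_iInter, Set.mem_empty_iff_false, iff_false, not_forall]
    by_contra hcon
    push_neg at hcon
    have hxnone : x ∈ Fnone := hcon none
    have hxsome : ∀ i, x ∈ Fsome i := fun i => hcon (some i)
    rw [hFnonedef] at hxnone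
    obtain ⟨f, hf, hxf⟩ := Set.mem_iUnion₂.1 hxnone
    have hxall : x ∈ ⋂ k, F₀ f k := by
      refine Set.mem_iInter.2 ?_
      rintro (i | _ | j)
      · exact Set.mem_iInter₂.1 (hxsome i) f hf
      · exact hxf.1
      · exact Set.mem_iInter₂.1 hxf.2 j (Finset.mem_univ j)
    rw [hF₀e f ((hmemK f).1 hf)] at hxall
    exact hxall
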